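/- Let ℓ ≥ 1 and let u = (u_n)_{n>ℓ} be a pre-gelation large-cluster solution on [0,T] such that for every j ≥ 0 the moment series m_j(t) = ∑_{n>ℓ} n^j u_n(t) converges uniformly on [0,T]. Then for every k ≥ 1 and every t ∈ [0,T], ṁ_k(t) = −2 m_{k+1}(t)/m₁(t) + ∑_{q+r+s=k} (k!/(q! r! s!)) (−ℓ)^q m_{r+1}(t) m_{s+1}(t)/m₁(t)², where the sum is over triples of nonnegative integers (q,r,s) with q+r+s = k. -/

import Mathlib

open Finset Filter Topology

noncomputable section

/-- Total particle number for large clusters `m₁(t) = ∑_{i > ℓ} i u_i(t)`. -/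
def m1large (ℓ : ℕ) (u : ℕ → ℝ → ℝ) (t : ℝ) : ℝ :=
  ∑' i : ℕ, if ℓ + 1 ≤ i then (i : ℝ) * u i t else 0

/-- Right-hand side of the large-cluster equation for `u n` (`n > ℓ`):
`(1/m₁²) ∑_{i=ℓ+1}^{n−1} i(n+ℓ−i) u_i u_{n+ℓ−i} − 2 n u_n/m₁`
(the sum is empty when `n = ℓ+1`). -/
def largeRHS (ℓ : ℕ) (u : ℕ → ℝ → ℝ) (n : ℕ) (t : ℝ) : ℝ :=
  (1 / (m1large ℓ u t) ^ 2) *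
      (∑ i ∈ Finset.Icc (ℓ + 1) (n - 1),
        (i : ℝ) * ((n + ℓ - i : ℕ) : ℝ) * u i t * u (n + ℓ - i) t)
    - 2 * (n : ℝ) * u n t / m1large ℓ u t

/-- A large-cluster solution on `[0,T]`: a nonnegative family
`u_n ∈ C¹([0,T],[0,1])` (`n > ℓ`) solving the large-cluster system, whose
first-moment series converges uniformly on `[0,T]`. -/
structure IsLargeSolution (ℓ : ℕ) (T : ℝ) (u : ℕ → ℝ → ℝ) : Prop where
  mem : ∀ n, ℓ < n → ∀ t ∈ Set.Icc (0 : ℝ) T, u n t ∈ Set.Icc (0 : ℝ) 1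
  contDiff : ∀ n, ℓ < n → ContDiffOn ℝ 1 (u n) (Set.Icc 0 T)
  ode : ∀ n, ℓ < n → ∀ t ∈ Set.Icc (0 : ℝ) T,
    HasDerivWithinAt (u n) (largeRHS ℓ u n t) (Set.Icc 0 T) t
  m1_unif : TendstoUniformlyOn
    (fun N t => ∑ i ∈ Finset.range N, if ℓ + 1 ≤ i then (i : ℝ) * u i t else 0)
    (m1large ℓ u) atTop (Set.Icc 0 T)

/-- A pre-gelation large-cluster solution: in addition the second-moment series
`m₂(t) = ∑_{i > ℓ} i² u_i(t)` converges uniformly on `[0,T]`. -/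
structure IsPreGelLargeSolution (ℓ : ℕ) (T : ℝ) (u : ℕ → ℝ → ℝ)
    extends IsLargeSolution ℓ T u : Prop where
  m2_unif : TendstoUniformlyOn
    (fun N t => ∑ i ∈ Finset.range N, if ℓ + 1 ≤ i then (i : ℝ) ^ 2 * u i t else 0)
    (fun t => ∑' i : ℕ, if ℓ + 1 ≤ i then (i : ℝ) ^ 2 * u i t else 0)
    atTop (Set.Icc 0 T)

/-- The `j`-th moment of a large-cluster solution:
`m_j(t) = ∑_{n > ℓ} n^j u_n(t)`. -/
def largeMoment (ℓ : ℕ) (u : ℕ → ℝ → ℝ) (j : ℕ) (t : ℝ) : ℝ :=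
  ∑' n : ℕ, if ℓ + 1 ≤ n then (n : ℝ) ^ j * u n t else 0

/-! ### Auxiliary definitions -/

/-- The summand of the `j`-th moment series. -/
def phiF (ℓ : ℕ) (u : ℕ → ℝ → ℝ) (j : ℕ) (t : ℝ) (n : ℕ) : ℝ :=
  if ℓ + 1 ≤ n then (n : ℝ) ^ j * u n t else 0

/-- The right-hand side of the moment hierarchy. -/
def RHSfun (ℓ : ℕ) (u : ℕ → ℝ → ℝ) (k : ℕ) (t : ℝ) : ℝ :=
  -2 * largeMoment ℓ u (k + 1) t / largeMoment ℓ u 1 t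
    + ∑ q ∈ Finset.range (k + 1), ∑ r ∈ Finset.range (k + 1),
        ∑ s ∈ Finset.range (k + 1),
          if q + r + s = k then
            ((k.factorial : ℝ) /
                ((q.factorial : ℝ) * (r.factorial : ℝ) * (s.factorial : ℝ))) *
              (-(ℓ : ℝ)) ^ q *
              (largeMoment ℓ u (r + 1) t * largeMoment ℓ u (s + 1) t /
                (largeMoment ℓ u 1 t) ^ 2)
          else 0

/-- Partial sums of the term-by-term differentiated `k`-th moment series. -/
def DNfun (ℓ : ℕ) (u : ℕ → ℝ → ℝ) (k N : ℕ) (t : ℝ) : ℝ :=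
  ∑ n ∈ Finset.range N, if ℓ + 1 ≤ n then (n : ℝ) ^ k * largeRHS ℓ u n t else 0

/-- The coagulation kernel summand, as a function of pairs. -/
def akerF (ℓ k : ℕ) (u : ℕ → ℝ → ℝ) (t : ℝ) (p : ℕ × ℕ) : ℝ :=
  (if ℓ + 1 ≤ p.1 then (p.1 : ℝ) * u p.1 t else 0) *
    (if ℓ + 1 ≤ p.2 then (p.2 : ℝ) * u p.2 t else 0) *
    ((p.1 + p.2 - ℓ : ℕ) : ℝ) ^ k

/-- Pairs indexing the quadratic part of the partial derivative sums. -/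
def SNset (ℓ N : ℕ) : Finset (ℕ × ℕ) :=
  (Finset.range N ×ˢ Finset.range N).filter
    (fun p => ℓ + 1 ≤ p.1 ∧ ℓ + 1 ≤ p.2 ∧ p.1 + p.2 < N + ℓ)

set_option linter.unusedSectionVars false

section Aux

variable {ℓ : ℕ} {T : ℝ} {u : ℕ → ℝ → ℝ}

lemma largeMoment_eq_tsum (j : ℕ) (t : ℝ) :
    largeMoment ℓ u j t = ∑' n, phiF ℓ u j t n := rfl

lemma m1large_eq (t : ℝ) : m1large ℓ u t = largeMoment ℓ u 1 t := by
  unfold m1large largeMoment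
  congr 1; funext n; rw [pow_one]

variable (hu : IsPreGelLargeSolution ℓ T u)
  (hmom : ∀ j : ℕ, TendstoUniformlyOn
      (fun N t => ∑ n ∈ Finset.range N,
        if ℓ + 1 ≤ n then (n : ℝ) ^ j * u n t else 0)
      (largeMoment ℓ u j) atTop (Set.Icc 0 T))

include hu in
lemma phiF_nonneg {t : ℝ} (ht : t ∈ Set.Icc (0 : ℝ) T) (j : ℕ) (n : ℕ) :
    0 ≤ phiF ℓ u j t n := by
  unfold phiF
  split
  · next h =>
    have := (hu.mem n (by omega) t ht).1
    positivity
  · exact le_refl 0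

include hu hmom in
lemma hasSum_phiF {t : ℝ} (ht : t ∈ Set.Icc (0 : ℝ) T) (j : ℕ) :
    HasSum (phiF ℓ u j t) (largeMoment ℓ u j t) := by
  have h0 : ∀ n, 0 ≤ phiF ℓ u j t n := phiF_nonneg hu ht j
  have htend : Tendsto (fun N => ∑ n ∈ Finset.range N, phiF ℓ u j t n) atTop
      (𝓝 (largeMoment ℓ u j t)) := (hmom j).tendsto_at ht
  have hmono : Monotone (fun N => ∑ n ∈ Finset.range N, phiF ℓ u j t n) := by
    intro a b hab
    exact Finset.sum_le_sum_of_subset_of_nonneg (Finset.range_subset_range.2 hab)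
      (fun n _ _ => h0 n)
  have hle : ∀ N, ∑ n ∈ Finset.range N, phiF ℓ u j t n ≤ largeMoment ℓ u j t :=
    fun N => hmono.ge_of_tendsto htend N
  have hsumm : Summable (phiF ℓ u j t) := summable_of_sum_range_le h0 hle
  have := hsumm.hasSum
  have hlim : largeMoment ℓ u j t = ∑' n, phiF ℓ u j t n := largeMoment_eq_tsum j t
  rwa [hlim]

include hu hmom in
lemma largeMoment_nonneg {t : ℝ} (ht : t ∈ Set.Icc (0 : ℝ) T) (j : ℕ) :
    0 ≤ largeMoment ℓ u j t := by
  rw [largeMoment_eq_tsum]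
  exact tsum_nonneg (phiF_nonneg hu ht j)

include hu in
lemma continuousOn_partial (j N : ℕ) :
    ContinuousOn (fun t => ∑ n ∈ Finset.range N, phiF ℓ u j t n) (Set.Icc 0 T) := by
  apply continuousOn_finset_sum
  intro n _
  unfold phiF
  by_cases h : ℓ + 1 ≤ n
  · simp only [if_pos h]
    exact Continuous.continuousOn (by continuity) |>.mul
      ((hu.contDiff n (by omega)).continuousOn)
  · simp only [if_neg h]
    exact continuousOn_const

include hu hmom in
lemma continuousOn_largeMoment (j : ℕ) :
    ContinuousOn (largeMoment ℓ u j) (Set.Icc 0 T) := by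
  apply (hmom j).continuousOn
  refine Frequently.of_forall (fun N => ?_)
  exact continuousOn_partial hu j N

include hu hmom in
lemma exists_bound (hT : 0 < T) (j : ℕ) :
    ∃ C : ℝ, 0 < C ∧ ∀ t ∈ Set.Icc (0 : ℝ) T, largeMoment ℓ u j t ≤ C := by
  have hne : (Set.Icc (0 : ℝ) T).Nonempty := Set.nonempty_Icc.2 hT.le
  obtain ⟨x, hx, hmax⟩ := (isCompact_Icc).exists_isMaxOn hne
    (continuousOn_largeMoment hu hmom j)
  exact ⟨largeMoment ℓ u j x + 1, by
      have := largeMoment_nonneg hu hmom hx j; linarith,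
    fun t ht => by have := hmax ht; simp only [Set.mem_setOf_eq] at this ⊢; linarith⟩

include hu hmom in
/-- The tail `∑_{n ≥ M}` of the `j`-th moment series. -/
lemma tail_eq {t : ℝ} (ht : t ∈ Set.Icc (0 : ℝ) T) (j M : ℕ) :
    ∑' n, (if M ≤ n then phiF ℓ u j t n else 0)
      = largeMoment ℓ u j t - ∑ n ∈ Finset.range M, phiF ℓ u j t n := by
  have hs := hasSum_phiF hu hmom ht j
  have hsplit : ∀ n, phiF ℓ u j t n
      = (if n < M then phiF ℓ u j t n else 0) + (if M ≤ n then phiF ℓ u j t n else 0) := by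
    intro n
    rcases lt_or_ge n M with h | h
    · simp [h, not_le.2 h]
    · simp [h, not_lt.2 h]
  have hsum1 : Summable (fun n => if n < M then phiF ℓ u j t n else 0) := by
    apply summable_of_ne_finset_zero (s := Finset.range M)
    intro n hn
    simp [Finset.mem_range] at hn
    simp [not_lt.2 hn]
  have hsum2 : Summable (fun n => if M ≤ n then phiF ℓ u j t n else 0) := by
    apply hs.summable.of_nonneg_of_le
    · intro n; split
      · exact phiF_nonneg hu ht j n
      · exact le_refl 0
    · intro n; split
      · exact le_refl _
      · exact phiF_nonneg hu ht j n
  have h1 : ∑' n, (if n < M then phiF ℓ u j t n else 0) = ∑ n ∈ Finset.range M, phiF ℓ u j t n := by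
    rw [tsum_eq_sum (s := Finset.range M)]
    · apply Finset.sum_congr rfl
      intro n hn
      simp [Finset.mem_range] at hn
      simp [hn]
    · intro n hn
      simp [Finset.mem_range] at hn
      simp [not_lt.2 hn]
  have := hsum1.tsum_add hsum2
  rw [← tsum_congr hsplit] at this
  rw [largeMoment_eq_tsum, this, h1]
  ring

include hu hmom in
/-- Uniform smallness of moment tails. -/
lemma uniform_tail (j : ℕ) {ε : ℝ} (hε : 0 < ε) :
    ∃ M : ℕ, ∀ t ∈ Set.Icc (0 : ℝ) T,
      ∑' n, (if M ≤ n then phiF ℓ u j t n else 0) ≤ ε := by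
  have := Metric.tendstoUniformlyOn_iff.1 (hmom j) ε hε
  rw [eventually_atTop] at this
  obtain ⟨M, hM⟩ := this
  refine ⟨M, fun t ht => ?_⟩
  rw [tail_eq hu hmom ht j M]
  have := hM M le_rfl t ht
  rw [Real.dist_eq, abs_lt] at this
  have h2 := this.2
  unfold phiF
  linarith [this.2]

/-! ### The quadratic kernel -/

include hu in
lemma akerF_nonneg {t : ℝ} (ht : t ∈ Set.Icc (0 : ℝ) T) (k : ℕ) (p : ℕ × ℕ) :
    0 ≤ akerF ℓ k u t p := by
  unfold akerF
  have h1 : (0:ℝ) ≤ (if ℓ + 1 ≤ p.1 then (p.1 : ℝ) * u p.1 t else 0) := by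
    split
    · next h => have := (hu.mem p.1 (by omega) t ht).1; positivity
    · exact le_refl 0
  have h2 : (0:ℝ) ≤ (if ℓ + 1 ≤ p.2 then (p.2 : ℝ) * u p.2 t else 0) := by
    split
    · next h => have := (hu.mem p.2 (by omega) t ht).1; positivity
    · exact le_refl 0
  positivity

include hu in
lemma akerF_le {t : ℝ} (ht : t ∈ Set.Icc (0 : ℝ) T) (k : ℕ) (p : ℕ × ℕ) :
    akerF ℓ k u t p ≤ 2 ^ k * (phiF ℓ u (k+1) t p.1 * phiF ℓ u (k+1) t p.2) := by
  obtain ⟨i, j⟩ := p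
  unfold akerF phiF
  by_cases hi : ℓ + 1 ≤ i
  · by_cases hj : ℓ + 1 ≤ j
    · simp only [if_pos hi, if_pos hj]
      have hui := (hu.mem i (by omega) t ht).1
      have huj := (hu.mem j (by omega) t ht).1
      have hkey : ((i + j - ℓ : ℕ) : ℝ) ^ k ≤ 2 ^ k * (i:ℝ)^k * (j:ℝ)^k := by
        have h1 : ((i + j - ℓ : ℕ) : ℝ) ≤ 2 * (i:ℝ) * (j:ℝ) := by
          have : (i + j - ℓ : ℕ) ≤ 2 * i * j := by nlinarith [hi, hj, Nat.sub_le (i+j) ℓ]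
          calc ((i + j - ℓ : ℕ) : ℝ) ≤ ((2 * i * j : ℕ) : ℝ) := by exact_mod_cast this
            _ = 2 * (i:ℝ) * (j:ℝ) := by push_cast; ring
        have h0 : (0:ℝ) ≤ ((i + j - ℓ : ℕ) : ℝ) := Nat.cast_nonneg _
        calc ((i + j - ℓ : ℕ) : ℝ) ^ k ≤ (2 * (i:ℝ) * (j:ℝ)) ^ k :=
              pow_le_pow_left₀ h0 h1 k
          _ = 2 ^ k * (i:ℝ)^k * (j:ℝ)^k := by ring
      have hij : (0:ℝ) ≤ (i:ℝ) * u i t * ((j:ℝ) * u j t) := by positivity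
      calc (i:ℝ) * u i t * ((j:ℝ) * u j t) * ((i + j - ℓ : ℕ) : ℝ) ^ k
          ≤ (i:ℝ) * u i t * ((j:ℝ) * u j t) * (2 ^ k * (i:ℝ)^k * (j:ℝ)^k) := by
            apply mul_le_mul_of_nonneg_left hkey hij
        _ = 2 ^ k * ((i:ℝ)^(k+1) * u i t * ((j:ℝ)^(k+1) * u j t)) := by ring
    · simp only [if_neg hj]
      simp
  · simp only [if_neg hi]
    simp

/-- Trinomial coefficients. -/
def cF (ℓ k q r : ℕ) : ℝ :=
  if q + r ≤ k then (k.choose q : ℝ) * ((k-q).choose r : ℝ) * (-(ℓ:ℝ))^q else 0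

lemma akerF_eq (k : ℕ) (t : ℝ) (i j : ℕ) :
    akerF ℓ k u t (i, j) = ∑ q ∈ Finset.range (k+1), ∑ r ∈ Finset.range (k+1),
      cF ℓ k q r * phiF ℓ u (r+1) t i * phiF ℓ u (k-q-r+1) t j := by
  by_cases hi : ℓ + 1 ≤ i
  · by_cases hj : ℓ + 1 ≤ j
    · unfold akerF phiF
      simp only [if_pos hi, if_pos hj]
      have hcast : ((i + j - ℓ : ℕ) : ℝ) = -(ℓ:ℝ) + ((i:ℝ) + (j:ℝ)) := by
        have h : ℓ ≤ i + j := by omega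
        push_cast [Nat.cast_sub h]
        ring
      rw [hcast, add_pow]
      rw [Finset.mul_sum]
      apply Finset.sum_congr rfl
      intro q hq
      have hqk : q ≤ k := by simp only [Finset.mem_range] at hq; omega
      have hext : ∑ r ∈ Finset.range (k+1),
            cF ℓ k q r * ((i:ℝ) ^ (r + 1) * u i t) * ((j:ℝ) ^ (k - q - r + 1) * u j t)
          = ∑ r ∈ Finset.range (k - q + 1),
            cF ℓ k q r * ((i:ℝ) ^ (r + 1) * u i t) * ((j:ℝ) ^ (k - q - r + 1) * u j t) := by
        symm
        apply Finset.sum_subset (Finset.range_subset_range.2 (show k - q + 1 ≤ k + 1 by omega))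
        intro r hr hnr
        have : k - q < r := by
          simp only [Finset.mem_range] at hr hnr; omega
        unfold cF
        rw [if_neg (by omega : ¬ q + r ≤ k)]
        ring
      rw [hext, add_pow]
      simp only [Finset.mul_sum, Finset.sum_mul]
      apply Finset.sum_congr rfl
      intro r hr
      have hrk : r ≤ k - q := by simp only [Finset.mem_range] at hr; omega
      unfold cF
      rw [if_pos (by omega : q + r ≤ k)]
      rw [pow_succ, pow_succ]
      ring
    · unfold akerF phiF
      simp only [if_neg hj]
      rw [mul_zero, zero_mul]
      symm
      apply Finset.sum_eq_zero
      intro q _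
      apply Finset.sum_eq_zero
      intro r _
      rw [mul_zero]
  · unfold akerF phiF
    simp only [if_neg hi]
    rw [zero_mul, zero_mul]
    symm
    apply Finset.sum_eq_zero
    intro q _
    apply Finset.sum_eq_zero
    intro r _
    rw [mul_zero, zero_mul]
    
include hu hmom in
lemma hasSum_akerF {t : ℝ} (ht : t ∈ Set.Icc (0 : ℝ) T) (k : ℕ) :
    HasSum (akerF ℓ k u t)
      (∑ q ∈ Finset.range (k+1), ∑ r ∈ Finset.range (k+1),
        cF ℓ k q r * (largeMoment ℓ u (r+1) t * largeMoment ℓ u (k-q-r+1) t)) := by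
  have hfun : akerF ℓ k u t = fun p : ℕ × ℕ =>
      ∑ q ∈ Finset.range (k+1), ∑ r ∈ Finset.range (k+1),
        cF ℓ k q r * phiF ℓ u (r+1) t p.1 * phiF ℓ u (k-q-r+1) t p.2 := by
    funext p
    obtain ⟨i, j⟩ := p
    exact akerF_eq k t i j
  rw [hfun]
  apply hasSum_sum
  intro q _
  apply hasSum_sum
  intro r _
  have h1 := hasSum_phiF hu hmom ht (r+1)
  have h2 := hasSum_phiF hu hmom ht (k-q-r+1)
  have hsummable : Summable (fun p : ℕ × ℕ =>
      phiF ℓ u (r+1) t p.1 * phiF ℓ u (k-q-r+1) t p.2) :=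
    Summable.mul_of_nonneg h1.summable h2.summable
      (fun n => phiF_nonneg hu ht (r+1) n) (fun n => phiF_nonneg hu ht (k-q-r+1) n)
  have := (h1.mul h2 hsummable).mul_left (cF ℓ k q r)
  convert this using 2 with p
  · rfl
  ring

include hu hmom in
lemma RHSfun_eq {t : ℝ} (ht : t ∈ Set.Icc (0 : ℝ) T) (k : ℕ) :
    RHSfun ℓ u k t
      = (1 / (largeMoment ℓ u 1 t) ^ 2) * (∑' p : ℕ × ℕ, akerF ℓ k u t p)
        - 2 * largeMoment ℓ u (k + 1) t / largeMoment ℓ u 1 t := by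
  rw [(hasSum_akerF hu hmom ht k).tsum_eq]
  unfold RHSfun
  have key : ∀ q ∈ Finset.range (k+1), ∀ r ∈ Finset.range (k+1),
      (∑ s ∈ Finset.range (k+1),
        if q + r + s = k then
          ((k.factorial : ℝ) /
              ((q.factorial : ℝ) * (r.factorial : ℝ) * (s.factorial : ℝ))) *
            (-(ℓ : ℝ)) ^ q *
            (largeMoment ℓ u (r + 1) t * largeMoment ℓ u (s + 1) t /
              (largeMoment ℓ u 1 t) ^ 2)
        else 0)
      = 1 / (largeMoment ℓ u 1 t) ^ 2 *
          (cF ℓ k q r * (largeMoment ℓ u (r+1) t * largeMoment ℓ u (k-q-r+1) t)) := by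
    intro q hq r hr
    rw [Finset.mem_range] at hq hr
    by_cases hqr : q + r ≤ k
    · rw [Finset.sum_eq_single (k - q - r)]
      · rw [if_pos (by omega)]
        have hcoef : (k.factorial : ℝ) /
            ((q.factorial : ℝ) * (r.factorial : ℝ) * ((k-q-r).factorial : ℝ))
            = (k.choose q : ℝ) * ((k-q).choose r : ℝ) := by
          have h1 : k.choose q * q.factorial * (k-q).factorial = k.factorial :=
            Nat.choose_mul_factorial_mul_factorial (by omega)
          have h2 : (k-q).choose r * r.factorial * (k-q-r).factorial = (k-q).factorial :=
            Nat.choose_mul_factorial_mul_factorial (by omega)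
          have hne : ((q.factorial : ℝ) * (r.factorial : ℝ) * ((k-q-r).factorial : ℝ)) ≠ 0 := by
            positivity
          rw [div_eq_iff hne]
          have hN : k.choose q * ((k-q).choose r) *
              (q.factorial * (r.factorial * (k-q-r).factorial)) = k.factorial := by
            calc k.choose q * ((k-q).choose r) *
                  (q.factorial * (r.factorial * (k-q-r).factorial))
                = k.choose q * q.factorial *
                    ((k-q).choose r * r.factorial * (k-q-r).factorial) := by ring
              _ = k.choose q * q.factorial * (k-q).factorial := by rw [h2]
              _ = k.factorial := h1
          have hNR := congrArg (fun n : ℕ => (n : ℝ)) hN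
          push_cast at hNR
          linear_combination -hNR
        rw [hcoef]
        unfold cF
        rw [if_pos hqr]
        ring
      · intro s hs hne
        rw [if_neg (by omega)]
      · intro h
        exact absurd (Finset.mem_range.2 (by omega)) h
    · rw [Finset.sum_eq_zero (fun s _ => by rw [if_neg (by omega)])]
      unfold cF
      rw [if_neg hqr]
      ring
  rw [Finset.sum_congr rfl (fun q hq => Finset.sum_congr rfl (fun r hr => key q hq r hr))]
  simp only [← Finset.mul_sum]
  ring

lemma AN_eq (k N : ℕ) (t : ℝ) :
    (∑ n ∈ Finset.range N, if ℓ + 1 ≤ n then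
        (n : ℝ) ^ k * (∑ i ∈ Finset.Icc (ℓ + 1) (n - 1),
          (i : ℝ) * ((n + ℓ - i : ℕ) : ℝ) * u i t * u (n + ℓ - i) t)
      else 0)
    = ∑ p ∈ SNset ℓ N, akerF ℓ k u t p := by
  rw [← Finset.sum_filter]
  have h1 : ∀ n ∈ (Finset.range N).filter (fun n => ℓ + 1 ≤ n),
      (n : ℝ) ^ k * (∑ i ∈ Finset.Icc (ℓ + 1) (n - 1),
          (i : ℝ) * ((n + ℓ - i : ℕ) : ℝ) * u i t * u (n + ℓ - i) t)
      = ∑ i ∈ Finset.Icc (ℓ + 1) (n - 1),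
          (n : ℝ) ^ k * ((i : ℝ) * ((n + ℓ - i : ℕ) : ℝ) * u i t * u (n + ℓ - i) t) :=
    fun n _ => Finset.mul_sum _ _ _
  rw [Finset.sum_congr rfl h1]
  rw [Finset.sum_sigma']
  apply Finset.sum_nbij' (i := fun a => (a.2, a.1 + ℓ - a.2)) (j := fun p => ⟨p.1 + p.2 - ℓ, p.1⟩)
  · rintro ⟨n, i⟩ ha
    simp only [Finset.mem_sigma, Finset.mem_filter, Finset.mem_range, Finset.mem_Icc] at ha
    obtain ⟨⟨hnN, hln⟩, hli, hin⟩ := ha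
    simp only [SNset, Finset.mem_filter, Finset.mem_product, Finset.mem_range]
    constructor
    · constructor <;> omega
    · refine ⟨by omega, by omega, by omega⟩
  · rintro ⟨i, j⟩ hp
    simp only [SNset, Finset.mem_filter, Finset.mem_product, Finset.mem_range] at hp
    obtain ⟨⟨hiN, hjN⟩, hli, hlj, hij⟩ := hp
    simp only [Finset.mem_sigma, Finset.mem_filter, Finset.mem_range, Finset.mem_Icc]
    refine ⟨⟨by omega, by omega⟩, by omega, by omega⟩
  · rintro ⟨n, i⟩ ha
    simp only [Finset.mem_sigma, Finset.mem_filter, Finset.mem_range, Finset.mem_Icc] at ha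
    obtain ⟨⟨hnN, hln⟩, hli, hin⟩ := ha
    have : i + (n + ℓ - i) - ℓ = n := by omega
    simp [this]
  · rintro ⟨i, j⟩ hp
    simp only [SNset, Finset.mem_filter, Finset.mem_product, Finset.mem_range] at hp
    obtain ⟨⟨hiN, hjN⟩, hli, hlj, hij⟩ := hp
    have : i + j - ℓ + ℓ - i = j := by omega
    simp [this]
  · rintro ⟨n, i⟩ ha
    simp only [Finset.mem_sigma, Finset.mem_filter, Finset.mem_range, Finset.mem_Icc] at ha
    obtain ⟨⟨hnN, hln⟩, hli, hin⟩ := ha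
    unfold akerF
    simp only
    rw [if_pos hli, if_pos (show ℓ + 1 ≤ n + ℓ - i by omega)]
    rw [show i + (n + ℓ - i) - ℓ = n from by omega]
    ring

lemma DNfun_eq (k N : ℕ) (t : ℝ) :
    DNfun ℓ u k N t
      = (1 / (m1large ℓ u t) ^ 2) * (∑ p ∈ SNset ℓ N, akerF ℓ k u t p)
        - (2 / m1large ℓ u t) * (∑ n ∈ Finset.range N, phiF ℓ u (k+1) t n) := by
  rw [← AN_eq (ℓ := ℓ) (u := u) k N t]
  unfold DNfun largeRHS phiF
  rw [Finset.mul_sum, Finset.mul_sum, ← Finset.sum_sub_distrib]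
  apply Finset.sum_congr rfl
  intro n _
  by_cases hn : ℓ + 1 ≤ n
  · rw [if_pos hn, if_pos hn, if_pos hn]
    rw [pow_succ]
    ring
  · rw [if_neg hn, if_neg hn, if_neg hn]
    ring

include hu hmom in
lemma tail_bound (hT : 0 < T) (k : ℕ) {ε : ℝ} (hε : 0 < ε) :
    ∃ N₀ : ℕ, ∀ N ≥ N₀, ∀ t ∈ Set.Icc (0 : ℝ) T,
      |(∑' p : ℕ × ℕ, akerF ℓ k u t p) - ∑ p ∈ SNset ℓ N, akerF ℓ k u t p| ≤ ε := by
  obtain ⟨C, hC, hCb⟩ := exists_bound hu hmom hT (k+1)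
  have hden : (0:ℝ) < 2 ^ (k+1) * C := by positivity
  set ε' := ε / (2 ^ (k+1) * C) with hε'def
  have hε' : 0 < ε' := div_pos hε hden
  obtain ⟨M, hM⟩ := uniform_tail hu hmom (k+1) hε'
  refine ⟨2 * M, fun N hN t ht => ?_⟩
  have hsum : Summable (akerF ℓ k u t) := (hasSum_akerF hu hmom ht k).summable
  have h0 : ∀ p, 0 ≤ akerF ℓ k u t p := akerF_nonneg hu ht k
  have hub : ∑ p ∈ SNset ℓ N, akerF ℓ k u t p ≤ ∑' p : ℕ × ℕ, akerF ℓ k u t p :=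
    hsum.sum_le_tsum _ (fun p _ => h0 p)
  -- the main tail estimate
  set F : Finset (ℕ × ℕ) := Finset.range M ×ˢ Finset.range M with hF
  set φ : ℕ → ℝ := phiF ℓ u (k+1) t with hφ
  set χ : ℕ → ℝ := fun n => if M ≤ n then φ n else 0 with hχ
  have hφs : Summable φ := (hasSum_phiF hu hmom ht (k+1)).summable
  have hφ0 : ∀ n, 0 ≤ φ n := phiF_nonneg hu ht (k+1)
  have hχ0 : ∀ n, 0 ≤ χ n := by
    intro n; rw [hχ]; dsimp only; split
    · exact hφ0 n
    · exact le_refl 0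
  have hχs : Summable χ := by
    apply hφs.of_nonneg_of_le hχ0
    intro n; rw [hχ]; dsimp only; split
    · exact le_refl _
    · exact hφ0 n
  have hχφs : Summable (fun p : ℕ × ℕ => χ p.1 * φ p.2) :=
    Summable.mul_of_nonneg hχs hφs hχ0 hφ0
  have hφχs : Summable (fun p : ℕ × ℕ => φ p.1 * χ p.2) :=
    Summable.mul_of_nonneg hφs hχs hφ0 hχ0
  set g : ℕ × ℕ → ℝ := fun p => 2 ^ k * (χ p.1 * φ p.2 + φ p.1 * χ p.2) with hg
  have hgs : Summable g := ((hχφs.add hφχs).mul_left _)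
  have hg0 : ∀ p, 0 ≤ g p := by
    intro p; rw [hg]; dsimp only
    have := hχ0 p.1; have := hφ0 p.2; have := hφ0 p.1; have := hχ0 p.2
    positivity
  -- sum over F bounds from below
  have hFsub : F.filter (fun p => ℓ + 1 ≤ p.1 ∧ ℓ + 1 ≤ p.2) ⊆ SNset ℓ N := by
    intro p hp
    simp only [hF, Finset.mem_filter, Finset.mem_product, Finset.mem_range] at hp
    simp only [SNset, Finset.mem_filter, Finset.mem_product, Finset.mem_range]
    obtain ⟨⟨h1, h2⟩, h3, h4⟩ := hp
    exact ⟨⟨by omega, by omega⟩, h3, h4, by omega⟩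
  have hFeq : ∑ p ∈ F, akerF ℓ k u t p
      = ∑ p ∈ F.filter (fun p => ℓ + 1 ≤ p.1 ∧ ℓ + 1 ≤ p.2), akerF ℓ k u t p := by
    symm
    apply Finset.sum_filter_of_ne
    intro p _ hne
    by_contra hcon
    apply hne
    unfold akerF
    rcases not_and_or.1 hcon with h | h
    · rw [if_neg h]; ring
    · rw [if_neg h]; ring
  have hFle : ∑ p ∈ F, akerF ℓ k u t p ≤ ∑ p ∈ SNset ℓ N, akerF ℓ k u t p := by
    rw [hFeq]
    exact Finset.sum_le_sum_of_subset_of_nonneg hFsub (fun p _ _ => h0 p)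
  -- tail over complement of F
  have hsplit := hsum.sum_add_tsum_subtype_compl F
  have htail : (∑' p : {x : ℕ × ℕ // x ∉ F}, akerF ℓ k u t ↑p) ≤ ε := by
    have hle : ∀ p : {x : ℕ × ℕ // x ∉ F}, akerF ℓ k u t ↑p ≤ g ↑p := by
      rintro ⟨p, hp⟩
      simp only [hF, Finset.mem_product, Finset.mem_range, not_and_or, not_lt] at hp
      have hak := akerF_le hu ht k p
      rcases hp with h | h
      · have : χ p.1 = φ p.1 := by rw [hχ]; dsimp only; rw [if_pos h]
        rw [hg]; dsimp only
        rw [this]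
        nlinarith [mul_nonneg (hφ0 p.1) (hχ0 p.2), hak, pow_pos (show (0:ℝ) < 2 by norm_num) k]
      · have : χ p.2 = φ p.2 := by rw [hχ]; dsimp only; rw [if_pos h]
        rw [hg]; dsimp only
        rw [this]
        nlinarith [mul_nonneg (hχ0 p.1) (hφ0 p.2), hak, pow_pos (show (0:ℝ) < 2 by norm_num) k]
    have h1 : (∑' p : {x : ℕ × ℕ // x ∉ F}, akerF ℓ k u t ↑p)
        ≤ ∑' p : {x : ℕ × ℕ // x ∉ F}, g ↑p :=
      Summable.tsum_le_tsum hle (hsum.subtype _) (hgs.subtype _)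
    have h2 : (∑' p : {x : ℕ × ℕ // x ∉ F}, g ↑p) ≤ ∑' p : ℕ × ℕ, g p := by
      have := hgs.sum_add_tsum_subtype_compl F
      have hFg : 0 ≤ ∑ p ∈ F, g p := Finset.sum_nonneg (fun p _ => hg0 p)
      linarith
    have h3 : (∑' p : ℕ × ℕ, g p) ≤ ε := by
      have hgval : (∑' p : ℕ × ℕ, g p)
          = 2 ^ k * ((∑' n, χ n) * (∑' n, φ n) + (∑' n, φ n) * (∑' n, χ n)) := by
        rw [hg]
        rw [tsum_mul_left]
        congr 1
        rw [hχφs.tsum_add hφχs]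
        rw [hχs.tsum_mul_tsum hφs hχφs, hφs.tsum_mul_tsum hχs hφχs]
      rw [hgval]
      have hχle : (∑' n, χ n) ≤ ε' := hM t ht
      have hχnn : 0 ≤ (∑' n, χ n) := tsum_nonneg hχ0
      have hφle : (∑' n, φ n) ≤ C := by
        have := (hasSum_phiF hu hmom ht (k+1)).tsum_eq
        rw [hφ, this]
        exact hCb t ht
      have hφnn : 0 ≤ (∑' n, φ n) := tsum_nonneg hφ0
      have hmul : (∑' n, χ n) * (∑' n, φ n) ≤ ε' * C :=
        mul_le_mul hχle hφle hφnn hε'.le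
      have hfin : (2:ℝ) ^ k * ((∑' n, χ n) * (∑' n, φ n) + (∑' n, φ n) * (∑' n, χ n))
          ≤ 2 ^ k * (2 * (ε' * C)) := by
        have h2k : (0:ℝ) < 2 ^ k := by positivity
        nlinarith [hmul, h2k]
      have : (2:ℝ) ^ k * (2 * (ε' * C)) = ε := by
        rw [hε'def]
        field_simp
        ring
      linarith
    linarith
  rw [abs_of_nonneg (by linarith)]
  linarith

include hu hmom in
lemma key_unif (hT : 0 < T) (k : ℕ) {δ : ℝ} (hδ : 0 < δ) {J : Set ℝ}
    (hJ : J ⊆ Set.Icc 0 T) (hJδ : ∀ t ∈ J, δ ≤ largeMoment ℓ u 1 t) :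
    TendstoUniformlyOn (fun N t => DNfun ℓ u k N t) (RHSfun ℓ u k) atTop J := by
  rw [Metric.tendstoUniformlyOn_iff]
  intro ε hε
  have hε₁ : (0:ℝ) < ε * δ^2 / 4 := by positivity
  have hε₂ : (0:ℝ) < ε * δ / 8 := by positivity
  obtain ⟨N₁, hN₁⟩ := tail_bound hu hmom hT k hε₁
  have h2 := Metric.tendstoUniformlyOn_iff.1 (hmom (k+1)) (ε * δ / 8) hε₂
  rw [eventually_atTop] at h2
  obtain ⟨N₂, hN₂⟩ := h2
  filter_upwards [eventually_ge_atTop N₁, eventually_ge_atTop N₂] with N hge1 hge2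
  intro t ht
  have htI := hJ ht
  have hm : δ ≤ largeMoment ℓ u 1 t := hJδ t ht
  have hmpos : 0 < largeMoment ℓ u 1 t := lt_of_lt_of_le hδ hm
  have hDN := DNfun_eq (ℓ := ℓ) (u := u) k N t
  rw [m1large_eq] at hDN
  have hR := RHSfun_eq hu hmom htI k
  set m := largeMoment ℓ u 1 t with hmdef
  set A := ∑' p : ℕ × ℕ, akerF ℓ k u t p with hA
  set AN := ∑ p ∈ SNset ℓ N, akerF ℓ k u t p with hAN
  set B := largeMoment ℓ u (k+1) t with hB
  set BN := ∑ n ∈ Finset.range N, phiF ℓ u (k+1) t n with hBN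
  have hdiff : RHSfun ℓ u k t - DNfun ℓ u k N t
      = (1 / m^2) * (A - AN) - (2 / m) * (B - BN) := by
    rw [hR, hDN]
    field_simp
    ring
  have hAtail : |A - AN| ≤ ε * δ^2 / 4 := hN₁ N hge1 t htI
  have hBtail : |B - BN| < ε * δ / 8 := by
    have := hN₂ N hge2 t htI
    rw [Real.dist_eq] at this
    have hBeq : (∑ n ∈ Finset.range N, if ℓ + 1 ≤ n then (n:ℝ)^(k+1) * u n t else 0) = BN := rfl
    rw [hBeq] at this
    exact this
  rw [Real.dist_eq, hdiff]
  have habs : |(1 / m^2) * (A - AN) - (2 / m) * (B - BN)|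
      ≤ (1 / m^2) * |A - AN| + (2 / m) * |B - BN| := by
    calc |(1 / m^2) * (A - AN) - (2 / m) * (B - BN)|
        ≤ |(1 / m^2) * (A - AN)| + |(2 / m) * (B - BN)| := abs_sub _ _
      _ = (1 / m^2) * |A - AN| + (2 / m) * |B - BN| := by
          rw [abs_mul, abs_mul, abs_of_nonneg (by positivity : (0:ℝ) ≤ 1 / m^2),
            abs_of_nonneg (by positivity : (0:ℝ) ≤ 2 / m)]
  have h1m : (1 : ℝ) / m^2 ≤ 1 / δ^2 := by
    apply one_div_le_one_div_of_le (by positivity)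
    nlinarith
  have h2m : (2 : ℝ) / m ≤ 2 / δ := by
    apply div_le_div_of_nonneg_left (by norm_num) hδ hm
  have hb1 : (1 / m^2) * |A - AN| ≤ (1 / δ^2) * (ε * δ^2 / 4) := by
    apply mul_le_mul h1m hAtail (abs_nonneg _) (by positivity)
  have hb2 : (2 / m) * |B - BN| ≤ (2 / δ) * (ε * δ / 8) := by
    apply mul_le_mul h2m hBtail.le (abs_nonneg _) (by positivity)
  have he1 : (1 / δ^2) * (ε * δ^2 / 4) = ε / 4 := by field_simp
  have he2 : (2 / δ) * (ε * δ / 8) = ε / 4 := by field_simp; ring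
  calc |(1 / m^2) * (A - AN) - (2 / m) * (B - BN)|
      ≤ (1 / m^2) * |A - AN| + (2 / m) * |B - BN| := habs
    _ ≤ ε / 4 + ε / 4 := by linarith
    _ < ε := by linarith

include hu hmom in
lemma continuousOn_m1large : ContinuousOn (m1large ℓ u) (Set.Icc 0 T) := by
  have : m1large ℓ u = largeMoment ℓ u 1 := funext (fun t => m1large_eq t)
  rw [this]
  exact continuousOn_largeMoment hu hmom 1

include hu hmom in
lemma continuousOn_RHSfun (k : ℕ) {δ : ℝ} (hδ : 0 < δ) {J : Set ℝ}
    (hJ : J ⊆ Set.Icc 0 T) (hJδ : ∀ t ∈ J, δ ≤ largeMoment ℓ u 1 t) :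
    ContinuousOn (RHSfun ℓ u k) J := by
  have hmne : ∀ t ∈ J, largeMoment ℓ u 1 t ≠ 0 :=
    fun t ht => ne_of_gt (lt_of_lt_of_le hδ (hJδ t ht))
  have hm : ContinuousOn (fun t => largeMoment ℓ u 1 t) J :=
    (continuousOn_largeMoment hu hmom 1).mono hJ
  unfold RHSfun
  apply ContinuousOn.add
  · exact ContinuousOn.div
      (continuousOn_const.mul ((continuousOn_largeMoment hu hmom (k+1)).mono hJ)) hm hmne
  · apply continuousOn_finset_sum
    intro q _
    apply continuousOn_finset_sum
    intro r _
    apply continuousOn_finset_sum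
    intro s _
    by_cases h : q + r + s = k
    · simp only [if_pos h]
      apply ContinuousOn.mul continuousOn_const
      apply ContinuousOn.div
      · exact ((continuousOn_largeMoment hu hmom (r+1)).mono hJ).mul
          ((continuousOn_largeMoment hu hmom (s+1)).mono hJ)
      · exact hm.pow 2
      · intro t ht
        exact pow_ne_zero 2 (hmne t ht)
    · simp only [if_neg h]
      exact continuousOn_const

include hu in
lemma continuousOn_u {n : ℕ} (hn : ℓ < n) : ContinuousOn (u n) (Set.Icc 0 T) :=
  (hu.contDiff n hn).continuousOn

include hu hmom in
lemma continuousOn_DNfun (k N : ℕ) {δ : ℝ} (hδ : 0 < δ) {J : Set ℝ}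
    (hJ : J ⊆ Set.Icc 0 T) (hJδ : ∀ t ∈ J, δ ≤ largeMoment ℓ u 1 t) :
    ContinuousOn (DNfun ℓ u k N) J := by
  have hmne : ∀ t ∈ J, m1large ℓ u t ≠ 0 := by
    intro t ht
    rw [m1large_eq]
    exact ne_of_gt (lt_of_lt_of_le hδ (hJδ t ht))
  have hm : ContinuousOn (m1large ℓ u) J := (continuousOn_m1large hu hmom).mono hJ
  unfold DNfun
  apply continuousOn_finset_sum
  intro n _
  by_cases hn : ℓ + 1 ≤ n
  · simp only [if_pos hn]
    apply ContinuousOn.mul continuousOn_const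
    unfold largeRHS
    apply ContinuousOn.sub
    · apply ContinuousOn.mul
      · apply ContinuousOn.div continuousOn_const (hm.pow 2)
        intro t ht
        exact pow_ne_zero 2 (hmne t ht)
      · apply continuousOn_finset_sum
        intro i hi
        rw [Finset.mem_Icc] at hi
        exact ((continuousOn_const.mul continuousOn_const).mul
            ((continuousOn_u hu (by omega)).mono hJ)).mul
          ((continuousOn_u hu (show ℓ < n + ℓ - i by omega)).mono hJ)
    · apply ContinuousOn.div
      · exact continuousOn_const.mul ((continuousOn_u hu (by omega)).mono hJ)
      · exact hm
      · exact hmne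
  · simp only [if_neg hn]
    exact continuousOn_const

include hu in
lemma partial_hasDeriv (k N : ℕ) {t : ℝ} (ht : t ∈ Set.Icc (0:ℝ) T) :
    HasDerivWithinAt (fun t => ∑ n ∈ Finset.range N, phiF ℓ u k t n)
      (DNfun ℓ u k N t) (Set.Icc 0 T) t := by
  unfold DNfun
  apply HasDerivWithinAt.fun_sum
  intro n _
  by_cases hn : ℓ + 1 ≤ n
  · simp only [phiF, if_pos hn]
    exact (hu.ode n (by omega) t ht).const_mul ((n:ℝ)^k)
  · simp only [phiF, if_neg hn]
    exact hasDerivWithinAt_const t _ 0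

include hu hmom in
lemma hierarchy_at (hT : 0 < T) (k : ℕ) {t₀ : ℝ} (ht₀ : t₀ ∈ Set.Icc (0:ℝ) T)
    (hpos : 0 < largeMoment ℓ u 1 t₀) :
    HasDerivWithinAt (largeMoment ℓ u k) (RHSfun ℓ u k t₀) (Set.Icc 0 T) t₀ := by
  set δ := largeMoment ℓ u 1 t₀ / 2 with hδdef
  have hδ : 0 < δ := by positivity
  have hδlt : δ < largeMoment ℓ u 1 t₀ := by rw [hδdef]; linarith
  -- find a neighbourhood where the first moment stays above δ
  have hcW : ContinuousWithinAt (largeMoment ℓ u 1) (Set.Icc 0 T) t₀ :=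
    (continuousOn_largeMoment hu hmom 1) t₀ ht₀
  have hev : (largeMoment ℓ u 1) ⁻¹' (Set.Ioi δ) ∈ 𝓝[Set.Icc 0 T] t₀ :=
    hcW (Ioi_mem_nhds hδlt)
  rw [Metric.mem_nhdsWithin_iff] at hev
  obtain ⟨ε, hε, hsub⟩ := hev
  set η := ε / 2 with hηdef
  have hη : 0 < η := by positivity
  set a := max 0 (t₀ - η) with hadef
  set b := min T (t₀ + η) with hbdef
  have ht₀0 : 0 ≤ t₀ := ht₀.1
  have ht₀T : t₀ ≤ T := ht₀.2
  have hat₀ : a ≤ t₀ := max_le ht₀0 (by linarith)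
  have ht₀b : t₀ ≤ b := le_min ht₀T (by linarith)
  have hab : a ≤ b := le_trans hat₀ ht₀b
  have ha0 : 0 ≤ a := le_max_left _ _
  have hbT : b ≤ T := min_le_left _ _
  have hJ : Set.Icc a b ⊆ Set.Icc 0 T := Set.Icc_subset_Icc (le_max_left _ _) (min_le_left _ _)
  have hJδ : ∀ t ∈ Set.Icc a b, δ ≤ largeMoment ℓ u 1 t := by
    intro t htab
    have h1 : t₀ - η ≤ t := le_trans (le_max_right _ _) htab.1
    have h2 : t ≤ t₀ + η := le_trans htab.2 (min_le_right _ _)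
    have hball : t ∈ Metric.ball t₀ ε := by
      rw [Metric.mem_ball, Real.dist_eq, abs_lt]
      constructor <;> [linarith; linarith]
    have := hsub ⟨hball, hJ htab⟩
    exact le_of_lt this
  have ht₀J : t₀ ∈ Set.Icc a b := ⟨hat₀, ht₀b⟩
  have hmemJ : Set.Icc a b ∈ 𝓝[Set.Icc 0 T] t₀ := by
    have heq : Set.Icc a b = Set.Icc (0:ℝ) T ∩ Set.Icc (t₀ - η) (t₀ + η) := by
      rw [Set.Icc_inter_Icc]
    rw [heq]
    exact inter_mem_nhdsWithin _ (Icc_mem_nhds (by linarith) (by linarith))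
  have hUnif := key_unif hu hmom hT k hδ hJ hJδ
  have hRcont : ContinuousOn (RHSfun ℓ u k) (Set.Icc a b) := continuousOn_RHSfun hu hmom k hδ hJ hJδ
  -- integral representation of the moment on [a,b]
  have hrep : ∀ x ∈ Set.Icc a b,
      largeMoment ℓ u k x = largeMoment ℓ u k a + ∫ s in a..x, RHSfun ℓ u k s := by
    intro x hx
    have hax : a ≤ x := hx.1
    have hxb : x ≤ b := hx.2
    have hIax : Set.Icc a x ⊆ Set.Icc a b := Set.Icc_subset_Icc le_rfl hxb
    have hFTC : ∀ N : ℕ, ∫ s in a..x, DNfun ℓ u k N s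
        = (∑ n ∈ Finset.range N, phiF ℓ u k x n) - ∑ n ∈ Finset.range N, phiF ℓ u k a n := by
      intro N
      apply intervalIntegral.integral_eq_sub_of_hasDeriv_right_of_le hax
      · exact (continuousOn_partial hu k N).mono (Set.Subset.trans hIax hJ)
      · intro y hy
        have hyI : y ∈ Set.Icc (0:ℝ) T := hJ (hIax ⟨hy.1.le, hy.2.le⟩)
        have h0y : 0 < y := lt_of_le_of_lt ha0 hy.1
        have hyT : y < T := lt_of_lt_of_le hy.2 (le_trans hxb hbT)
        exact ((partial_hasDeriv hu k N hyI).hasDerivAt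
          (Icc_mem_nhds h0y hyT)).hasDerivWithinAt
      · rw [intervalIntegrable_iff_integrableOn_Icc_of_le hax]
        exact ((continuousOn_DNfun hu hmom k N hδ hJ hJδ).mono hIax).integrableOn_compact
          isCompact_Icc
    have hDint : IntervalIntegrable (RHSfun ℓ u k) MeasureTheory.volume a x := by
      rw [intervalIntegrable_iff_integrableOn_Icc_of_le hax]
      exact (hRcont.mono hIax).integrableOn_compact isCompact_Icc
    have hDNint : ∀ N, IntervalIntegrable (DNfun ℓ u k N) MeasureTheory.volume a x := by
      intro N
      rw [intervalIntegrable_iff_integrableOn_Icc_of_le hax]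
      exact ((continuousOn_DNfun hu hmom k N hδ hJ hJδ).mono hIax).integrableOn_compact
        isCompact_Icc
    have hIntTend : Tendsto (fun N => ∫ s in a..x, DNfun ℓ u k N s) atTop
        (𝓝 (∫ s in a..x, RHSfun ℓ u k s)) := by
      rw [Metric.tendsto_atTop]
      intro ε₀ hε₀
      have hpos' : (0:ℝ) < ε₀ / (x - a + 1) := by
        have : (0:ℝ) < x - a + 1 := by linarith
        positivity
      have := Metric.tendstoUniformlyOn_iff.1 hUnif (ε₀ / (x - a + 1)) hpos'
      rw [eventually_atTop] at this
      obtain ⟨N₀, hN₀⟩ := this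
      refine ⟨N₀, fun N hN => ?_⟩
      rw [Real.dist_eq]
      have hsubst : (∫ s in a..x, DNfun ℓ u k N s) - ∫ s in a..x, RHSfun ℓ u k s
          = ∫ s in a..x, (DNfun ℓ u k N s - RHSfun ℓ u k s) :=
        (intervalIntegral.integral_sub (hDNint N) hDint).symm
      rw [hsubst]
      have hbound : ∀ s ∈ Set.uIoc a x, ‖DNfun ℓ u k N s - RHSfun ℓ u k s‖ ≤ ε₀ / (x - a + 1) := by
        intro s hs
        rw [Set.uIoc_of_le hax] at hs
        have hsJ : s ∈ Set.Icc a b := ⟨hs.1.le, le_trans hs.2 hxb⟩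
        have := hN₀ N hN s hsJ
        rw [Real.dist_eq] at this
        rw [Real.norm_eq_abs, abs_sub_comm]
        exact this.le
      have := intervalIntegral.norm_integral_le_of_norm_le_const hbound
      rw [Real.norm_eq_abs] at this
      calc |∫ s in a..x, (DNfun ℓ u k N s - RHSfun ℓ u k s)|
          ≤ ε₀ / (x - a + 1) * |x - a| := this
        _ < ε₀ := by
            rw [abs_of_nonneg (by linarith : (0:ℝ) ≤ x - a)]
            rw [div_mul_eq_mul_div, div_lt_iff₀ (by linarith : (0:ℝ) < x - a + 1)]
            nlinarith
    have hSumTend : Tendsto (fun N => (∑ n ∈ Finset.range N, phiF ℓ u k x n)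
        - ∑ n ∈ Finset.range N, phiF ℓ u k a n) atTop
        (𝓝 (largeMoment ℓ u k x - largeMoment ℓ u k a)) := by
      exact ((hmom k).tendsto_at (hJ hx)).sub ((hmom k).tendsto_at (hJ ⟨le_rfl, hab⟩))
    have heq : (fun N => ∫ s in a..x, DNfun ℓ u k N s)
        = fun N => (∑ n ∈ Finset.range N, phiF ℓ u k x n)
            - ∑ n ∈ Finset.range N, phiF ℓ u k a n := funext hFTC
    rw [heq] at hIntTend
    have := tendsto_nhds_unique hIntTend hSumTend
    linarith [this]
  -- differentiate the integral representation
  haveI : Fact (t₀ ∈ Set.Icc a b) := ⟨ht₀J⟩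
  have hFderiv : HasDerivWithinAt (fun x => largeMoment ℓ u k a + ∫ s in a..x, RHSfun ℓ u k s)
      (RHSfun ℓ u k t₀) (Set.Icc a b) t₀ := by
    apply HasDerivWithinAt.const_add
    apply intervalIntegral.integral_hasDerivWithinAt_right
      (t := Set.Icc a b)
    · rw [intervalIntegrable_iff_integrableOn_Icc_of_le hat₀]
      exact (hRcont.mono (Set.Icc_subset_Icc le_rfl ht₀b)).integrableOn_compact isCompact_Icc
    · exact hRcont.stronglyMeasurableAtFilter_nhdsWithin measurableSet_Icc t₀
    · exact hRcont t₀ ht₀J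
  have hfinal : HasDerivWithinAt (largeMoment ℓ u k) (RHSfun ℓ u k t₀) (Set.Icc a b) t₀ := by
    apply hFderiv.congr
    · intro y hy
      exact hrep y hy
    · exact hrep t₀ ht₀J
  exact hfinal.mono_of_mem_nhdsWithin hmemJ

/-! ### Special values of the hierarchy right-hand side -/

lemma RHSfun_one {t : ℝ} (hm : largeMoment ℓ u 1 t ≠ 0) : RHSfun ℓ u 1 t = -(ℓ:ℝ) := by
  unfold RHSfun
  norm_num [Finset.sum_range_succ, Nat.factorial]
  field_simp
  ring

lemma RHSfun_two {t : ℝ} (hm : largeMoment ℓ u 1 t ≠ 0) :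
    RHSfun ℓ u 2 t = (ℓ:ℝ)^2
      - 4 * (ℓ:ℝ) * (largeMoment ℓ u 2 t / largeMoment ℓ u 1 t)
      + 2 * (largeMoment ℓ u 2 t / largeMoment ℓ u 1 t)^2 := by
  unfold RHSfun
  norm_num [Finset.sum_range_succ, Nat.factorial]
  field_simp
  ring

/-! ### Positivity of the first moment -/

include hu hmom in
lemma u_eq_zero_of_m1_zero {t : ℝ} (ht : t ∈ Set.Icc (0:ℝ) T)
    (h : largeMoment ℓ u 1 t = 0) : ∀ n, ℓ < n → u n t = 0 := by
  intro n hn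
  have hs := hasSum_phiF hu hmom ht 1
  have h0 := phiF_nonneg hu ht 1
  have hterm : phiF ℓ u 1 t n ≤ 0 := by
    have := hs.summable.le_tsum n (fun j _ => h0 j)
    rw [← largeMoment_eq_tsum, h] at this
    exact this
  have : phiF ℓ u 1 t n = 0 := le_antisymm hterm (h0 n)
  unfold phiF at this
  rw [if_pos (by omega : ℓ + 1 ≤ n)] at this
  have hnpos : (0:ℝ) < (n:ℝ)^1 := by
    have : 0 < n := by omega
    positivity
  by_contra hne
  have hu0 := (hu.mem n hn t ht).1
  have hupos : 0 < u n t := lt_of_le_of_ne hu0 (Ne.symm hne)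
  nlinarith

include hu hmom in
lemma m2_zero_of_m1_zero {t : ℝ} (ht : t ∈ Set.Icc (0:ℝ) T)
    (h : largeMoment ℓ u 1 t = 0) : largeMoment ℓ u 2 t = 0 := by
  rw [largeMoment_eq_tsum]
  have : ∀ n, phiF ℓ u 2 t n = 0 := by
    intro n
    unfold phiF
    split
    · next hn =>
      rw [u_eq_zero_of_m1_zero hu hmom ht h n (by omega)]
      ring
    · rfl
  rw [tsum_congr this]
  exact tsum_zero

include hu hmom in
lemma m2_ge {t : ℝ} (ht : t ∈ Set.Icc (0:ℝ) T) :
    ((ℓ:ℝ) + 1) * largeMoment ℓ u 1 t ≤ largeMoment ℓ u 2 t := by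
  have h1 := hasSum_phiF hu hmom ht 1
  have h2 := hasSum_phiF hu hmom ht 2
  rw [largeMoment_eq_tsum, largeMoment_eq_tsum, ← tsum_mul_left]
  apply Summable.tsum_le_tsum _ (h1.summable.mul_left _) h2.summable
  intro n
  unfold phiF
  split
  · next hn =>
    have hu0 := (hu.mem n (by omega) t ht).1
    have hcast : ((ℓ:ℝ) + 1) ≤ (n:ℝ) := by exact_mod_cast hn
    have hn0 : (0:ℝ) ≤ (n:ℝ) := Nat.cast_nonneg n
    calc ((ℓ:ℝ) + 1) * ((n:ℝ)^1 * u n t) = (((ℓ:ℝ) + 1) * (n:ℝ)) * u n t := by ring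
      _ ≤ ((n:ℝ) * (n:ℝ)) * u n t := by
          apply mul_le_mul_of_nonneg_right _ hu0
          exact mul_le_mul_of_nonneg_right hcast hn0
      _ = (n:ℝ)^2 * u n t := by ring
  · simp

include hu hmom in
lemma m1_zero_ge (hT : 0 < T)
    (hinit_sum : HasSum (fun i : ℕ => if ℓ + 1 ≤ i then u i 0 else 0) 1) :
    ((ℓ:ℝ) + 1) ≤ largeMoment ℓ u 1 0 := by
  have h0I : (0:ℝ) ∈ Set.Icc (0:ℝ) T := ⟨le_rfl, hT.le⟩
  have h1 := hasSum_phiF hu hmom h0I 1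
  have : ((ℓ:ℝ) + 1) = ((ℓ:ℝ) + 1) * ∑' i, (if ℓ + 1 ≤ i then u i 0 else 0) := by
    rw [hinit_sum.tsum_eq]; ring
  rw [this, ← tsum_mul_left, largeMoment_eq_tsum]
  apply Summable.tsum_le_tsum _ (hinit_sum.summable.mul_left _) h1.summable
  intro n
  unfold phiF
  split
  · next hn =>
    have hu0 := (hu.mem n (by omega) 0 h0I).1
    have hcast : ((ℓ:ℝ) + 1) ≤ (n:ℝ) := by exact_mod_cast hn
    rw [pow_one]
    exact mul_le_mul_of_nonneg_right hcast hu0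
  · simp

include hu hmom in
lemma m1_pos (hℓ : 1 ≤ ℓ) (hT : 0 < T)
    (hinit_sum : HasSum (fun i : ℕ => if ℓ + 1 ≤ i then u i 0 else 0) 1) :
    ∀ t ∈ Set.Icc (0:ℝ) T, 0 < largeMoment ℓ u 1 t := by
  by_contra hcon
  push_neg at hcon
  obtain ⟨t₁, ht₁, hle⟩ := hcon
  have ht₁0 : largeMoment ℓ u 1 t₁ = 0 := le_antisymm hle (largeMoment_nonneg hu hmom ht₁ 1)
  set Z : Set ℝ := Set.Icc 0 T ∩ (largeMoment ℓ u 1) ⁻¹' {0} with hZ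
  have hZne : Z.Nonempty := ⟨t₁, ht₁, ht₁0⟩
  have hZclosed : IsClosed Z :=
    (continuousOn_largeMoment hu hmom 1).preimage_isClosed_of_isClosed isClosed_Icc
      isClosed_singleton
  have hZbdd : BddBelow Z := ⟨0, fun z hz => hz.1.1⟩
  set t₀ := sInf Z with ht₀def
  have ht₀Z : t₀ ∈ Z := hZclosed.csInf_mem hZne hZbdd
  have ht₀I : t₀ ∈ Set.Icc (0:ℝ) T := ht₀Z.1
  have hm1t₀ : largeMoment ℓ u 1 t₀ = 0 := ht₀Z.2
  have hm10 := m1_zero_ge hu hmom hT hinit_sum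
  have ht₀pos : 0 < t₀ := by
    rcases lt_or_eq_of_le ht₀I.1 with h | h
    · exact h
    · exfalso; rw [← h] at hm1t₀; rw [hm1t₀] at hm10
      have : (0:ℝ) < (ℓ:ℝ) + 1 := by positivity
      linarith
  have hpos_lt : ∀ s, 0 ≤ s → s < t₀ → 0 < largeMoment ℓ u 1 s := by
    intro s hs0 hst
    have hsI : s ∈ Set.Icc (0:ℝ) T := ⟨hs0, le_trans hst.le ht₀I.2⟩
    rcases lt_or_eq_of_le (largeMoment_nonneg hu hmom hsI 1) with h | h
    · exact h
    · exfalso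
      have : s ∈ Z := ⟨hsI, h.symm⟩
      have := csInf_le hZbdd this
      rw [← ht₀def] at this
      linarith
  have hIsub : Set.Icc (0:ℝ) t₀ ⊆ Set.Icc (0:ℝ) T := Set.Icc_subset_Icc le_rfl ht₀I.2
  -- derivative facts on the interior
  have hderiv : ∀ x ∈ Set.Ioo (0:ℝ) t₀,
      HasDerivAt (largeMoment ℓ u 1) (-(ℓ:ℝ)) x ∧
        HasDerivAt (largeMoment ℓ u 2) (RHSfun ℓ u 2 x) x := by
    intro x hx
    have hxI : x ∈ Set.Icc (0:ℝ) T := hIsub ⟨hx.1.le, hx.2.le⟩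
    have hxpos := hpos_lt x hx.1.le hx.2
    have hmem : Set.Icc (0:ℝ) T ∈ 𝓝 x :=
      Icc_mem_nhds hx.1 (lt_of_lt_of_le hx.2 ht₀I.2)
    have h1 := (hierarchy_at hu hmom hT 1 hxI hxpos).hasDerivAt hmem
    have h2 := (hierarchy_at hu hmom hT 2 hxI hxpos).hasDerivAt hmem
    rw [RHSfun_one (ne_of_gt hxpos)] at h1
    exact ⟨h1, h2⟩
  -- the first moment is affine: m₁ 0 = ℓ t₀
  have hf : ∀ p ∈ Set.Icc (0:ℝ) t₀,
      largeMoment ℓ u 1 p + (ℓ:ℝ) * p = largeMoment ℓ u 1 0 := by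
    have hfc : ContinuousOn (fun p => largeMoment ℓ u 1 p + (ℓ:ℝ) * p) (Set.Icc 0 t₀) :=
      ((continuousOn_largeMoment hu hmom 1).mono hIsub).add (by fun_prop)
    have hfd : ∀ x ∈ interior (Set.Icc (0:ℝ) t₀),
        HasDerivAt (fun p => largeMoment ℓ u 1 p + (ℓ:ℝ) * p) 0 x := by
      intro x hx
      rw [interior_Icc] at hx
      have := (hderiv x hx).1.fun_add ((hasDerivAt_id x).const_mul (ℓ:ℝ))
      exact this.congr_deriv (by ring)
    have hmono := monotoneOn_of_deriv_nonneg (convex_Icc (0:ℝ) t₀) hfc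
      (fun x hx => ((hfd x hx).differentiableAt).differentiableWithinAt)
      (fun x hx => by rw [(hfd x hx).deriv])
    have hanti := antitoneOn_of_deriv_nonpos (convex_Icc (0:ℝ) t₀) hfc
      (fun x hx => ((hfd x hx).differentiableAt).differentiableWithinAt)
      (fun x hx => by rw [(hfd x hx).deriv])
    intro p hp
    have h0mem : (0:ℝ) ∈ Set.Icc (0:ℝ) t₀ := ⟨le_rfl, ht₀pos.le⟩
    have hle1 := hmono h0mem hp hp.1
    have hle2 := hanti h0mem hp hp.1
    simp only [mul_zero, add_zero] at hle1 hle2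
    linarith
  have hm10eq : largeMoment ℓ u 1 0 = (ℓ:ℝ) * t₀ := by
    have := hf t₀ ⟨ht₀pos.le, le_rfl⟩
    rw [hm1t₀] at this
    linarith
  -- the second moment grows at rate ≥ 2 - ℓ²
  have hψ : MonotoneOn (fun p => largeMoment ℓ u 2 p + ((ℓ:ℝ)^2 - 2) * p)
      (Set.Icc (0:ℝ) t₀) := by
    have hfc : ContinuousOn (fun p => largeMoment ℓ u 2 p + ((ℓ:ℝ)^2 - 2) * p)
        (Set.Icc 0 t₀) :=
      ((continuousOn_largeMoment hu hmom 2).mono hIsub).add (by fun_prop)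
    have hfd : ∀ x ∈ interior (Set.Icc (0:ℝ) t₀),
        HasDerivAt (fun p => largeMoment ℓ u 2 p + ((ℓ:ℝ)^2 - 2) * p)
          (RHSfun ℓ u 2 x + ((ℓ:ℝ)^2 - 2)) x := by
      intro x hx
      rw [interior_Icc] at hx
      have := (hderiv x hx).2.fun_add ((hasDerivAt_id x).const_mul ((ℓ:ℝ)^2 - 2))
      exact this.congr_deriv (by ring)
    apply monotoneOn_of_deriv_nonneg (convex_Icc (0:ℝ) t₀) hfc
      (fun x hx => ((hfd x hx).differentiableAt).differentiableWithinAt)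
    intro x hx
    rw [(hfd x hx).deriv]
    rw [interior_Icc] at hx
    have hxI : x ∈ Set.Icc (0:ℝ) T := hIsub ⟨hx.1.le, hx.2.le⟩
    have hxpos := hpos_lt x hx.1.le hx.2
    rw [RHSfun_two (ne_of_gt hxpos)]
    set y := largeMoment ℓ u 2 x / largeMoment ℓ u 1 x with hy
    have hyge : (ℓ:ℝ) + 1 ≤ y := by
      rw [hy, le_div_iff₀ hxpos]
      exact m2_ge hu hmom hxI
    nlinarith [hyge]
  -- contradiction
  have h0mem : (0:ℝ) ∈ Set.Icc (0:ℝ) t₀ := ⟨le_rfl, ht₀pos.le⟩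
  have ht₀mem : t₀ ∈ Set.Icc (0:ℝ) t₀ := ⟨ht₀pos.le, le_rfl⟩
  have hψle := hψ h0mem ht₀mem ht₀pos.le
  simp only at hψle
  have hm2t₀ : largeMoment ℓ u 2 t₀ = 0 := m2_zero_of_m1_zero hu hmom ht₀I hm1t₀
  have hm2_0 : ((ℓ:ℝ) + 1) * largeMoment ℓ u 1 0 ≤ largeMoment ℓ u 2 0 :=
    m2_ge hu hmom ⟨le_rfl, hT.le⟩
  rw [hm10eq] at hm2_0
  have hL1 : (1:ℝ) ≤ (ℓ:ℝ) := by exact_mod_cast hℓ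
  nlinarith [hψle, hm2t₀, hm2_0, ht₀pos, hL1]

end Aux

/-- moment hierarchy: let `ℓ ≥ 1` and let `u` be a pre-gelation
large-cluster solution on `[0,T]` all of whose moment series converge uniformly
on `[0,T]`.  Then for every `k ≥ 1` and `t ∈ [0,T]`,
`ṁ_k = −2 m_{k+1}/m₁ + ∑_{q+r+s=k} (k!/(q!r!s!)) (−ℓ)^q m_{r+1} m_{s+1}/m₁²`. -/
theorem moment_hierarchy (ℓ : ℕ) (hℓ : 1 ≤ ℓ) (T : ℝ) (hT : 0 < T)
    (u : ℕ → ℝ → ℝ) (hu : IsPreGelLargeSolution ℓ T u)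
    (hinit_nonneg : ∀ n, ℓ < n → 0 ≤ u n 0)
    (hinit_sum : HasSum (fun i : ℕ => if ℓ + 1 ≤ i then u i 0 else 0) 1)
    (hmom : ∀ j : ℕ, TendstoUniformlyOn
      (fun N t => ∑ n ∈ Finset.range N,
        if ℓ + 1 ≤ n then (n : ℝ) ^ j * u n t else 0)
      (largeMoment ℓ u j) atTop (Set.Icc 0 T)) :
    ∀ k : ℕ, 1 ≤ k → ∀ t ∈ Set.Icc (0 : ℝ) T,
      HasDerivWithinAt (largeMoment ℓ u k)
        (-2 * largeMoment ℓ u (k + 1) t / largeMoment ℓ u 1 t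
          + ∑ q ∈ Finset.range (k + 1), ∑ r ∈ Finset.range (k + 1),
              ∑ s ∈ Finset.range (k + 1),
                if q + r + s = k then
                  ((k.factorial : ℝ) /
                      ((q.factorial : ℝ) * (r.factorial : ℝ) * (s.factorial : ℝ))) *
                    (-(ℓ : ℝ)) ^ q *
                    (largeMoment ℓ u (r + 1) t * largeMoment ℓ u (s + 1) t /
                      (largeMoment ℓ u 1 t) ^ 2)
                else 0)
        (Set.Icc 0 T) t := by
  intro k hk t ht
  exact hierarchy_at hu hmom hT k ht (m1_pos hu hmom hℓ hT hinit_sum t ht)
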